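/- The minimum of the rate function I on an open subset of 𝓜 is either zero, infinity, or is not achieved; equivalently, for every open set G ⊆ 𝓜 and every μ ∈ G with 0 < I(μ) < ∞, there exists ν ∈ G with I(ν) < I(μ). -/

import Mathlib

open MeasureTheory ProbabilityTheory Filter Topology Set
open scoped ENNReal NNReal Classical

noncomputable section

/-! ### Graph occupation measures and the space `𝓜` -/

/-- The graph occupation measure of a function `φ` (viewed on `[0,∞)`):
`m(φ)(A) = Leb {s ≥ 0 : (s, φ s) ∈ A}`. -/
def graphOccupation (φ : ℝ → ℝ) : Measure (ℝ × ℝ) :=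
  Measure.map (fun s => (s, φ s)) (volume.restrict (Ici (0 : ℝ)))

/-- The (topological) support of a measure on `ℝ × ℝ`: the points all of whose open
neighborhoods have positive measure. -/
def measSupport (μ : Measure (ℝ × ℝ)) : Set (ℝ × ℝ) :=
  {p | ∀ U : Set (ℝ × ℝ), IsOpen U → p ∈ U → 0 < μ U}

/-- The class `𝓜`: measures on `[0,∞) × ℝ` whose first marginal is Lebesgue measure on
`[0,∞)` and whose support is contained in the union of the closures of the graph of a
nonnegative nondecreasing `f` and of the graph of `-g`, `g` nonnegative nondecreasing. -/
def McalSet : Set (Measure (ℝ × ℝ)) :=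
  {μ | μ.map Prod.fst = volume.restrict (Ici (0 : ℝ)) ∧
    ∃ f g : ℝ → ℝ, MonotoneOn f (Ici 0) ∧ MonotoneOn g (Ici 0) ∧
      (∀ t ∈ Ici (0 : ℝ), 0 ≤ f t) ∧ (∀ t ∈ Ici (0 : ℝ), 0 ≤ g t) ∧
      measSupport μ ⊆
        closure {p : ℝ × ℝ | 0 ≤ p.1 ∧ p.2 = f p.1} ∪
        closure {p : ℝ × ℝ | 0 ≤ p.1 ∧ p.2 = -g p.1}}

/-- The topology of local weak convergence on measures on `ℝ × ℝ`, generated by the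
evaluation maps `μ ↦ ∫ f dμ` against continuous compactly supported functions. -/
instance measureWeakTopology : TopologicalSpace (Measure (ℝ × ℝ)) :=
  TopologicalSpace.generateFrom
    {S | ∃ f : ℝ × ℝ → ℝ, Continuous f ∧ HasCompactSupport f ∧
      ∃ O : Set ℝ, IsOpen O ∧ S = {μ : Measure (ℝ × ℝ) | (∫ p, f p ∂μ) ∈ O}}

/-- The topology `𝓣_L` of weak convergence on compact subsets of `[0, L] × ℝ`. -/
def topologyUpTo (L : ℝ) : TopologicalSpace (Measure (ℝ × ℝ)) :=
  TopologicalSpace.generateFrom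
    {S | ∃ f : ℝ × ℝ → ℝ, Continuous f ∧ HasCompactSupport f ∧
      tsupport f ⊆ Icc (0 : ℝ) L ×ˢ (univ : Set ℝ) ∧
      ∃ O : Set ℝ, IsOpen O ∧ S = {μ : Measure (ℝ × ℝ) | (∫ p, f p ∂μ) ∈ O}}

/-- `f_μ`: the minimal left-continuous nondecreasing function whose graph closure covers the
part of the support of `μ` in the open upper half plane. -/
def fOf (μ : Measure (ℝ × ℝ)) (t : ℝ) : ℝ :=
  sSup ({0} ∪ {y : ℝ | 0 < y ∧ ∃ s, 0 ≤ s ∧ s < t ∧ (s, y) ∈ measSupport μ})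

/-- `g_μ`: the minimal left-continuous nondecreasing function whose graph closure covers
(the negative of) the part of the support of `μ` in the open lower half plane. -/
def gOf (μ : Measure (ℝ × ℝ)) (t : ℝ) : ℝ :=
  sSup ({0} ∪ {y : ℝ | 0 < y ∧ ∃ s, 0 ≤ s ∧ s < t ∧ (s, -y) ∈ measSupport μ})

/-- `s_{μ+}`: the supremum of the support of the projection to the time axis of the
restriction of `μ` to the open upper half plane. -/
def sPlus (μ : Measure (ℝ × ℝ)) : ℝ≥0∞ :=
  sSup {x : ℝ≥0∞ | ∃ s : ℝ, x = ENNReal.ofReal s ∧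
    ∀ ε : ℝ, 0 < ε → 0 < μ (Ioo (s - ε) (s + ε) ×ˢ Ioi (0 : ℝ))}

/-- `s_{μ-}`: the supremum of the support of the projection to the time axis of the
restriction of `μ` to the open lower half plane. -/
def sMinus (μ : Measure (ℝ × ℝ)) : ℝ≥0∞ :=
  sSup {x : ℝ≥0∞ | ∃ s : ℝ, x = ENNReal.ofReal s ∧
    ∀ ε : ℝ, 0 < ε → 0 < μ (Ioo (s - ε) (s + ε) ×ˢ Iio (0 : ℝ))}

/-- The Lebesgue–Stieltjes measure of a monotone function (junk value `0` otherwise). -/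
def stieltjesMeasureOf (f : ℝ → ℝ) : Measure ℝ :=
  if hf : Monotone f then hf.stieltjesFunction.measure else 0

/-- The rate function `I` on measures: if `s_{μ-} = ∞` then
`I(μ) = (π²/2)∫_{(0,s_{μ+}]} t⁻² d(f_μ+g_μ) + (π²/8)∫_{(s_{μ+},∞)} t⁻² dg_μ`,
and if `s_{μ-} < ∞` the same formula with `f_μ, g_μ` exchanged and `s_{μ+}` replaced by
`s_{μ-}`. -/
def Irate (μ : Measure (ℝ × ℝ)) : ℝ≥0∞ :=
  if sMinus μ = ∞ then
    ENNReal.ofReal (Real.pi ^ 2 / 2) *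
      (∫⁻ t in {t : ℝ | 0 < t ∧ ENNReal.ofReal t ≤ sPlus μ}, ENNReal.ofReal ((t ^ 2)⁻¹)
        ∂(stieltjesMeasureOf (fOf μ) + stieltjesMeasureOf (gOf μ))) +
    ENNReal.ofReal (Real.pi ^ 2 / 8) *
      (∫⁻ t in {t : ℝ | 0 < t ∧ sPlus μ < ENNReal.ofReal t}, ENNReal.ofReal ((t ^ 2)⁻¹)
        ∂(stieltjesMeasureOf (gOf μ)))
  else
    ENNReal.ofReal (Real.pi ^ 2 / 2) *
      (∫⁻ t in {t : ℝ | 0 < t ∧ ENNReal.ofReal t ≤ sMinus μ}, ENNReal.ofReal ((t ^ 2)⁻¹)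
        ∂(stieltjesMeasureOf (fOf μ) + stieltjesMeasureOf (gOf μ))) +
    ENNReal.ofReal (Real.pi ^ 2 / 8) *
      (∫⁻ t in {t : ℝ | 0 < t ∧ sMinus μ < ENNReal.ofReal t}, ENNReal.ofReal ((t ^ 2)⁻¹)
        ∂(stieltjesMeasureOf (fOf μ)))

/-- The set `𝓚 = {μ ∈ 𝓜 : I(μ) ≤ 1}`. -/
def Kcal : Set (Measure (ℝ × ℝ)) := {μ | μ ∈ McalSet ∧ Irate μ ≤ 1}

/-- A subset of `𝓜` which is open in the subspace topology of `𝓜`. -/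
def IsOpenInM (G : Set (Measure (ℝ × ℝ))) : Prop :=
  ∃ V : Set (Measure (ℝ × ℝ)), IsOpen V ∧ G = V ∩ McalSet

/-- The interior, relative to `𝓜`, of a subset of `𝓜`. -/
def relInteriorM (Bs : Set (Measure (ℝ × ℝ))) : Set (Measure (ℝ × ℝ)) :=
  {μ | μ ∈ McalSet ∧ ∃ V, IsOpen V ∧ μ ∈ V ∧ V ∩ McalSet ⊆ Bs}

/-- The closure, relative to `𝓜`, of a subset of `𝓜`. -/
def relClosureM (Bs : Set (Measure (ℝ × ℝ))) : Set (Measure (ℝ × ℝ)) :=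
  {μ | μ ∈ McalSet ∧ ∀ V, IsOpen V → μ ∈ V → (V ∩ Bs).Nonempty}

/-! ### Step data `(h, x) ∈ 𝓢` -/

/-- The set `𝓢` of pairs of finite sequences `h = (h₁ < ⋯ < h_N)`, positive, and
`x = (x₁, …, x_N)` of nonzero reals such that `|x_i| ≤ |x_j|` whenever `i < j` and
`x_i, x_j` have the same sign. -/
structure StepData where
  /-- the length `N ≥ 1` -/
  N : ℕ
  Npos : 0 < N
  /-- the depths `h₁ < ⋯ < h_N` -/
  h : Fin N → ℝ
  /-- the positions `x₁, …, x_N` -/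
  x : Fin N → ℝ
  h_pos : ∀ i, 0 < h i
  h_mono : StrictMono h
  x_ne : ∀ i, x i ≠ 0
  x_sign : ∀ i j : Fin N, i < j → 0 < x i * x j → |x i| ≤ |x j|

/-- `i ∈ 𝓘_∞`: all of `x_i, x_{i+1}, …, x_N` have the same sign. -/
def StepData.inIinf (d : StepData) (i : Fin d.N) : Prop :=
  ∀ j : Fin d.N, i ≤ j → 0 < d.x i * d.x j

/-- `x_{i⁻}`: the value of `x` at the largest index `j < i` with `x_j` of the same sign
as `x_i`, and `0` if there is no such index. -/
def StepData.xMinus (d : StepData) (i : Fin d.N) : ℝ :=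
  if hs : (Finset.univ.filter (fun j : Fin d.N => j < i ∧ 0 < d.x j * d.x i)).Nonempty then
    d.x ((Finset.univ.filter (fun j : Fin d.N => j < i ∧ 0 < d.x j * d.x i)).max' hs)
  else 0

/-- The rate `I(h,x) = (π²/2) ∑_{i ∉ 𝓘_∞} |x_i - x_{i⁻}|/h_i² +
(π²/8) ∑_{i ∈ 𝓘_∞} |x_i - x_{i⁻}|/h_i²`. -/
def StepData.rate (d : StepData) : ℝ :=
  ∑ i : Fin d.N,
    (if d.inIinf i then Real.pi ^ 2 / 8 else Real.pi ^ 2 / 2) *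
      (|d.x i - d.xMinus i| / (d.h i) ^ 2)

/-- The step function `Φ_{h,x}`: `0` on `[0, h₁]`, `x_i` on `(h_i, h_{i+1}]`,
and `x_N` on `(h_N, ∞)`. -/
def StepData.stepFun (d : StepData) : ℝ → ℝ := fun t =>
  if hs : (Finset.univ.filter (fun i : Fin d.N => d.h i < t)).Nonempty then
    d.x ((Finset.univ.filter (fun i : Fin d.N => d.h i < t)).max' hs)
  else 0

/-- `μ_{h,x} = m(Φ_{h,x})`. -/
def StepData.occ (d : StepData) : Measure (ℝ × ℝ) := graphOccupation d.stepFun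

/-- `h_N`, the last depth. -/
def StepData.hN (d : StepData) : ℝ := d.h ⟨d.N - 1, Nat.sub_lt d.Npos Nat.one_pos⟩

/-- The open set `𝓤(h,x,ε)` of measures `ν ∈ 𝓜` charging
`(h_i - ε, h_i + ε) × (x_i, ∞)` for `x_i > 0` and `(h_i - ε, h_i + ε) × (-∞, x_i)`
for `x_i < 0`. -/
def StepData.Uset (d : StepData) (ε : ℝ) : Set (Measure (ℝ × ℝ)) :=
  {ν | ν ∈ McalSet ∧ ∀ i : Fin d.N,
    (0 < d.x i → 0 < ν (Ioo (d.h i - ε) (d.h i + ε) ×ˢ Ioi (d.x i))) ∧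
    (d.x i < 0 → 0 < ν (Ioo (d.h i - ε) (d.h i + ε) ×ˢ Iio (d.x i)))}

/-! ### The process of wells -/

/-- `[a,c]` is an interval witnessing the well property for the local minimum `x₀` of `f`:
`f x₀` is the minimum of `f` on `[a,c]` and `f a`, `f c` are the maximum values of `f`
on `[a, x₀]` and `[x₀, c]` respectively. -/
def IsWellOf (f : ℝ → ℝ) (x₀ a c : ℝ) : Prop :=
  a ≤ x₀ ∧ x₀ ≤ c ∧ IsMinOn f (Icc a c) x₀ ∧
    IsMaxOn f (Icc a x₀) a ∧ IsMaxOn f (Icc x₀ c) c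

/-- The left endpoint of the (maximal) well of `x₀`. -/
def wellLeft (f : ℝ → ℝ) (x₀ : ℝ) : ℝ := sInf {a | ∃ c, IsWellOf f x₀ a c}

/-- The right endpoint of the (maximal) well of `x₀`. -/
def wellRight (f : ℝ → ℝ) (x₀ : ℝ) : ℝ := sSup {c | ∃ a, IsWellOf f x₀ a c}

/-- The depth of the well of `x₀`. -/
def wellDepth (f : ℝ → ℝ) (x₀ : ℝ) : ℝ :=
  min (f (wellLeft f x₀) - f x₀) (f (wellRight f x₀) - f x₀)

/-- The bottoms of wells of depth at least `h` whose domain contains `0`. -/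
def wellCandidates (f : ℝ → ℝ) (h : ℝ) : Set ℝ :=
  {x₀ | (∃ a c, IsWellOf f x₀ a c) ∧ h ≤ wellDepth f x₀ ∧
    (0 : ℝ) ∈ Icc (wellLeft f x₀) (wellRight f x₀)}

/-- The process of wells `x_f`: for `h > 0`, the smallest point at which `f` attains its
minimum on the domain of the minimal well of depth at least `h` containing `0` (with value
`0` if there is no such well), and `x_f (h) = 0` for `h ≤ 0`. -/
def wellProcess (f : ℝ → ℝ) (h : ℝ) : ℝ :=
  if h ≤ 0 then 0
  else if H : ∃ x₀ ∈ wellCandidates f h, ∀ y ∈ wellCandidates f h,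
      Icc (wellLeft f x₀) (wellRight f x₀) ⊆ Icc (wellLeft f y) (wellRight f y) then
    sInf {z | z ∈ Icc (wellLeft f H.choose) (wellRight f H.choose) ∧
      IsMinOn f (Icc (wellLeft f H.choose) (wellRight f H.choose)) z}
  else 0

/-! ### Brownian motion -/

/-- `B` is a standard two-sided Brownian motion on the probability space `(Ω, P)`:
continuous paths, `B 0 = 0`, and for `s ≤ t` the increment `B t - B s` is a centered
Gaussian of variance `t - s`, with independent increments over disjoint intervals. -/
structure IsTwoSidedBM {Ω : Type*} [MeasurableSpace Ω] (P : Measure Ω)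
    (B : Ω → ℝ → ℝ) : Prop where
  isProb : IsProbabilityMeasure P
  cont : ∀ ω, Continuous (B ω)
  zero : ∀ ω, B ω 0 = 0
  meas : ∀ t : ℝ, Measurable fun ω => B ω t
  gauss_incr : ∀ s t : ℝ, s ≤ t →
    Measure.map (fun ω => B ω t - B ω s) P = gaussianReal 0 (Real.toNNReal (t - s))
  indep_incr : ∀ (n : ℕ) (t : Fin (n + 1) → ℝ), Monotone t →
    iIndepFun
      (fun i : Fin n => fun ω => B ω (t i.succ) - B ω (t i.castSucc)) P

/-- `B` is a standard one-sided Brownian motion (time set `[0,∞)`) started at `0`. -/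
structure IsBrownianMotion {Ω : Type*} [MeasurableSpace Ω] (P : Measure Ω)
    (B : Ω → ℝ → ℝ) : Prop where
  isProb : IsProbabilityMeasure P
  cont : ∀ ω, ContinuousOn (B ω) (Ici 0)
  zero : ∀ ω, B ω 0 = 0
  meas : ∀ t : ℝ, Measurable fun ω => B ω t
  gauss_incr : ∀ s t : ℝ, 0 ≤ s → s ≤ t →
    Measure.map (fun ω => B ω t - B ω s) P = gaussianReal 0 (Real.toNNReal (t - s))
  indep_incr : ∀ (n : ℕ) (t : Fin (n + 1) → ℝ), Monotone t → 0 ≤ t 0 →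
    iIndepFun
      (fun i : Fin n => fun ω => B ω (t i.succ) - B ω (t i.castSucc)) P

/-- The graph occupation measure `m(x_B / M)` of the scaled process of wells. -/
def scaledWellOcc {Ω : Type*} (B : Ω → ℝ → ℝ) (ω : Ω) (M : ℝ) : Measure (ℝ × ℝ) :=
  graphOccupation (fun h => wellProcess (B ω) h / M)

/-- The graph occupation measure `m(Z_a)` of `Z_a(s) = x_B(s a) / (a² log log a)`. -/
def wellOcc {Ω : Type*} (B : Ω → ℝ → ℝ) (ω : Ω) (a : ℝ) : Measure (ℝ × ℝ) :=
  graphOccupation (fun s => wellProcess (B ω) (s * a) / (a ^ 2 * Real.log (Real.log a)))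

/-! ### Sinai's walk -/

/-- Sinai's random walk in random environment: `p` is the i.i.d. environment with
`E log((1-p₁)/p₁) = 0`, `Var(log((1-p₁)/p₁)) = 1` and finite negative moments
`E[p₁^{-δ}], E[(1-p₁)^{-δ}] < ∞`; `U` is an i.i.d. sequence of uniform `[0,1]` variables
independent of the environment, and `S` is the nearest-neighbor walk on `ℤ` started at `0`
which from site `k` steps to `k+1` with probability `p_k` and to `k-1` with probability
`1 - p_k` (constructed from `U`). -/
structure IsSinaiWalk {Ω : Type*} [MeasurableSpace Ω] (P : Measure Ω)
    (p : Ω → ℤ → ℝ) (U : Ω → ℕ → ℝ) (S : Ω → ℕ → ℤ) : Prop where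
  isProb : IsProbabilityMeasure P
  p_meas : ∀ k : ℤ, Measurable fun ω => p ω k
  U_meas : ∀ n : ℕ, Measurable fun ω => U ω n
  p_mem : ∀ ω k, p ω k ∈ Icc (0 : ℝ) 1
  p_indep : iIndepFun (fun (k : ℤ) (ω : Ω) => p ω k) P
  p_ident : ∀ k : ℤ, Measure.map (fun ω => p ω k) P = Measure.map (fun ω => p ω 0) P
  U_unif : ∀ n : ℕ, Measure.map (fun ω => U ω n) P = volume.restrict (Icc (0 : ℝ) 1)
  U_indep : iIndepFun (fun (n : ℕ) (ω : Ω) => U ω n) P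
  pU_indep : IndepFun (fun ω (k : ℤ) => p ω k) (fun ω (n : ℕ) => U ω n) P
  mean_zero : ∫ ω, Real.log ((1 - p ω 0) / p ω 0) ∂P = 0
  var_one : ∫ ω, (Real.log ((1 - p ω 0) / p ω 0)) ^ 2 ∂P = 1
  neg_moment : ∃ δ : ℝ, 0 < δ ∧
    (∫⁻ ω, (ENNReal.ofReal (p ω 0))⁻¹ ^ δ ∂P) < ∞ ∧
    (∫⁻ ω, (ENNReal.ofReal (1 - p ω 0))⁻¹ ^ δ ∂P) < ∞
  S_zero : ∀ ω, S ω 0 = 0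
  S_step : ∀ ω n, S ω (n + 1) = S ω n + (if U ω n ≤ p ω (S ω n) then 1 else -1)

/-- The graph occupation measure of the rescaled walk `t ↦ S(e^{a t}) / (a² log log a)`. -/
def walkOcc {Ω : Type*} (S : Ω → ℕ → ℤ) (ω : Ω) (a : ℝ) : Measure (ℝ × ℝ) :=
  graphOccupation
    (fun t => (S ω ⌊Real.exp (a * t)⌋₊ : ℝ) / (a ^ 2 * Real.log (Real.log a)))

end

/-! ### Auxiliary results: vertical scaling of measures -/

namespace RateMinAux

open scoped Pointwise

/-- Vertical scaling by `c`. -/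
def vscale (c : ℝ) : ℝ × ℝ → ℝ × ℝ := fun p => (p.1, c * p.2)

lemma vscale_measurable (c : ℝ) : Measurable (vscale c) :=
  measurable_fst.prodMk (measurable_snd.const_mul c)

lemma vscale_continuous (c : ℝ) : Continuous (vscale c) :=
  continuous_fst.prodMk (continuous_const.mul continuous_snd)

lemma measSupport_map {μ : Measure (ℝ × ℝ)} {c : ℝ} (hc : c ≠ 0) (p : ℝ × ℝ) :
    p ∈ measSupport (μ.map (vscale c)) ↔ (p.1, c⁻¹ * p.2) ∈ measSupport μ := by
  constructor
  · intro hp W hW hpW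
    have hUopen : IsOpen (vscale c⁻¹ ⁻¹' W) := hW.preimage (vscale_continuous c⁻¹)
    have hpU : p ∈ vscale c⁻¹ ⁻¹' W := hpW
    have h0 := hp _ hUopen hpU
    rwa [Measure.map_apply (vscale_measurable c) (hUopen.measurableSet),
      show vscale c ⁻¹' (vscale c⁻¹ ⁻¹' W) = W by
        ext q
        simp [vscale, ← mul_assoc, inv_mul_cancel₀ hc]] at h0
  · intro hq U hU hpU
    rw [Measure.map_apply (vscale_measurable c) hU.measurableSet]
    refine hq _ (hU.preimage (vscale_continuous c)) ?_
    show vscale c (p.1, c⁻¹ * p.2) ∈ U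
    have : vscale c (p.1, c⁻¹ * p.2) = p := by
      simp [vscale, mul_inv_cancel_left₀ hc]
    rwa [this]

lemma fOf_map {μ : Measure (ℝ × ℝ)} {c : ℝ} (hc : 0 < c) :
    fOf (μ.map (vscale c)) = fun t => c * fOf μ t := by
  funext t
  unfold fOf
  have hset : ({0} ∪ {y : ℝ | 0 < y ∧ ∃ s, 0 ≤ s ∧ s < t ∧
        (s, y) ∈ measSupport (μ.map (vscale c))})
      = c • ({0} ∪ {y : ℝ | 0 < y ∧ ∃ s, 0 ≤ s ∧ s < t ∧ (s, y) ∈ measSupport μ}) := by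
    ext y
    simp only [Set.mem_smul_set, smul_eq_mul, Set.mem_union, Set.mem_singleton_iff,
      Set.mem_setOf_eq]
    constructor
    · rintro (rfl | ⟨hy, s, hs0, hst, hmem⟩)
      · exact ⟨0, Or.inl rfl, mul_zero c⟩
      · refine ⟨c⁻¹ * y, Or.inr ⟨by positivity, s, hs0, hst, ?_⟩,
          mul_inv_cancel_left₀ hc.ne' y⟩
        exact (measSupport_map hc.ne' (s, y)).1 hmem
    · rintro ⟨z, (rfl | ⟨hz, s, hs0, hst, hmem⟩), rfl⟩
      · exact Or.inl (mul_zero c)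
      · refine Or.inr ⟨by positivity, s, hs0, hst, ?_⟩
        rw [measSupport_map hc.ne' (s, c * z)]
        simpa [inv_mul_cancel_left₀ hc.ne'] using hmem
  rw [hset, Real.sSup_smul_of_nonneg hc.le, smul_eq_mul]

lemma gOf_map {μ : Measure (ℝ × ℝ)} {c : ℝ} (hc : 0 < c) :
    gOf (μ.map (vscale c)) = fun t => c * gOf μ t := by
  funext t
  unfold gOf
  have hset : ({0} ∪ {y : ℝ | 0 < y ∧ ∃ s, 0 ≤ s ∧ s < t ∧
        (s, -y) ∈ measSupport (μ.map (vscale c))})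
      = c • ({0} ∪ {y : ℝ | 0 < y ∧ ∃ s, 0 ≤ s ∧ s < t ∧ (s, -y) ∈ measSupport μ}) := by
    ext y
    simp only [Set.mem_smul_set, smul_eq_mul, Set.mem_union, Set.mem_singleton_iff,
      Set.mem_setOf_eq]
    constructor
    · rintro (rfl | ⟨hy, s, hs0, hst, hmem⟩)
      · exact ⟨0, Or.inl rfl, mul_zero c⟩
      · refine ⟨c⁻¹ * y, Or.inr ⟨by positivity, s, hs0, hst, ?_⟩,
          mul_inv_cancel_left₀ hc.ne' y⟩
        have := (measSupport_map hc.ne' (s, -y)).1 hmem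
        simpa [mul_neg] using this
    · rintro ⟨z, (rfl | ⟨hz, s, hs0, hst, hmem⟩), rfl⟩
      · exact Or.inl (mul_zero c)
      · refine Or.inr ⟨by positivity, s, hs0, hst, ?_⟩
        rw [measSupport_map hc.ne' (s, -(c * z))]
        simpa [mul_neg, inv_mul_cancel_left₀ hc.ne'] using hmem
  rw [hset, Real.sSup_smul_of_nonneg hc.le, smul_eq_mul]

lemma map_apply_prod_Ioi {μ : Measure (ℝ × ℝ)} {c : ℝ} (hc : 0 < c) (A : Set ℝ)
    (hA : MeasurableSet A) :
    (μ.map (vscale c)) (A ×ˢ Ioi (0 : ℝ)) = μ (A ×ˢ Ioi (0 : ℝ)) := by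
  rw [Measure.map_apply (vscale_measurable c) (hA.prod measurableSet_Ioi)]
  congr 1
  ext q
  simp only [vscale, Set.mem_preimage, Set.mem_prod, Set.mem_Ioi]
  exact and_congr_right fun _ => ⟨fun h => by nlinarith, fun h => by positivity⟩

lemma map_apply_prod_Iio {μ : Measure (ℝ × ℝ)} {c : ℝ} (hc : 0 < c) (A : Set ℝ)
    (hA : MeasurableSet A) :
    (μ.map (vscale c)) (A ×ˢ Iio (0 : ℝ)) = μ (A ×ˢ Iio (0 : ℝ)) := by
  rw [Measure.map_apply (vscale_measurable c) (hA.prod measurableSet_Iio)]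
  congr 1
  ext q
  simp only [vscale, Set.mem_preimage, Set.mem_prod, Set.mem_Iio]
  exact and_congr_right fun _ => ⟨fun h => by nlinarith, fun h => mul_neg_of_pos_of_neg hc h⟩

lemma sPlus_map {μ : Measure (ℝ × ℝ)} {c : ℝ} (hc : 0 < c) :
    sPlus (μ.map (vscale c)) = sPlus μ := by
  unfold sPlus
  congr 1
  ext x
  simp only [Set.mem_setOf_eq]
  refine exists_congr fun s => and_congr_right fun _ => forall_congr' fun ε =>
    imp_congr_right fun hε => ?_
  rw [map_apply_prod_Ioi hc _ measurableSet_Ioo]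

lemma sMinus_map {μ : Measure (ℝ × ℝ)} {c : ℝ} (hc : 0 < c) :
    sMinus (μ.map (vscale c)) = sMinus μ := by
  unfold sMinus
  congr 1
  ext x
  simp only [Set.mem_setOf_eq]
  refine exists_congr fun s => and_congr_right fun _ => forall_congr' fun ε =>
    imp_congr_right fun hε => ?_
  rw [map_apply_prod_Iio hc _ measurableSet_Ioo]

lemma stieltjes_smul (c : ℝ) (hc : 0 < c) (F : ℝ → ℝ) :
    stieltjesMeasureOf (fun t => c * F t) = ENNReal.ofReal c • stieltjesMeasureOf F := by
  by_cases hF : Monotone F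
  · have hcF : Monotone fun t => c * F t := fun a b hab =>
      mul_le_mul_of_nonneg_left (hF hab) hc.le
    rw [stieltjesMeasureOf, stieltjesMeasureOf, dif_pos hF, dif_pos hcF]
    have hr : ∀ x : ℝ, hcF.stieltjesFunction x = c * hF.stieltjesFunction x := by
      intro x
      rw [hcF.stieltjesFunction_eq, hF.stieltjesFunction_eq]
      exact rightLim_eq_of_tendsto
        ((hF.tendsto_rightLim x).const_mul c)
    refine Measure.ext_of_Ioc _ _ fun a b hab => ?_
    rw [Measure.smul_apply, smul_eq_mul, StieltjesFunction.measure_Ioc,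
      StieltjesFunction.measure_Ioc, hr, hr, ← mul_sub, ENNReal.ofReal_mul hc.le]
  · have hcF : ¬ Monotone fun t => c * F t := fun h =>
      hF fun a b hab => le_of_mul_le_mul_left (h hab) hc
    rw [stieltjesMeasureOf, stieltjesMeasureOf, dif_neg hF, dif_neg hcF, smul_zero]

lemma Irate_map {μ : Measure (ℝ × ℝ)} {c : ℝ} (hc : 0 < c) :
    Irate (μ.map (vscale c)) = ENNReal.ofReal c * Irate μ := by
  rw [Irate, Irate, sMinus_map hc, sPlus_map hc, fOf_map hc, gOf_map hc,
    stieltjes_smul c hc, stieltjes_smul c hc]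
  split_ifs with h
  · rw [← smul_add, Measure.restrict_smul, Measure.restrict_smul, lintegral_smul_measure,
      lintegral_smul_measure]
    ring
  · rw [← smul_add, Measure.restrict_smul, Measure.restrict_smul, lintegral_smul_measure,
      lintegral_smul_measure]
    ring

lemma mem_Mcal_map {μ : Measure (ℝ × ℝ)} {c : ℝ} (hμ : μ ∈ McalSet) (hc : 0 < c) :
    μ.map (vscale c) ∈ McalSet := by
  obtain ⟨hmarg, f, g, hfm, hgm, hf0, hg0, hsupp⟩ := hμ
  refine ⟨?_, fun t => c * f t, fun t => c * g t,
    fun a ha b hb hab => mul_le_mul_of_nonneg_left (hfm ha hb hab) hc.le,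
    fun a ha b hb hab => mul_le_mul_of_nonneg_left (hgm ha hb hab) hc.le,
    fun t ht => mul_nonneg hc.le (hf0 t ht), fun t ht => mul_nonneg hc.le (hg0 t ht), ?_⟩
  · rw [Measure.map_map measurable_fst (vscale_measurable c)]
    exact hmarg
  · intro p hp
    have hq : (p.1, c⁻¹ * p.2) ∈ measSupport μ := (measSupport_map hc.ne' p).1 hp
    have hpq : vscale c (p.1, c⁻¹ * p.2) = p := by
      simp [vscale, mul_inv_cancel_left₀ hc.ne']
    rcases hsupp hq with hcl | hcl
    · left
      have h1 : vscale c '' closure {p : ℝ × ℝ | 0 ≤ p.1 ∧ p.2 = f p.1} ⊆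
          closure {p : ℝ × ℝ | 0 ≤ p.1 ∧ p.2 = c * f p.1} := by
        refine (image_closure_subset_closure_image (vscale_continuous c)).trans
          (closure_mono ?_)
        rintro _ ⟨r, ⟨hr1, hr2⟩, rfl⟩
        exact ⟨hr1, by simp [vscale, hr2]⟩
      exact h1 ⟨_, hcl, hpq⟩
    · right
      have h1 : vscale c '' closure {p : ℝ × ℝ | 0 ≤ p.1 ∧ p.2 = -g p.1} ⊆
          closure {p : ℝ × ℝ | 0 ≤ p.1 ∧ p.2 = -(c * g p.1)} := by
        refine (image_closure_subset_closure_image (vscale_continuous c)).trans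
          (closure_mono ?_)
        rintro _ ⟨r, ⟨hr1, hr2⟩, rfl⟩
        exact ⟨hr1, by simp [vscale, hr2]⟩
      exact h1 ⟨_, hcl, hpq⟩

lemma strip_finite {μ : Measure (ℝ × ℝ)}
    (hmarg : μ.map Prod.fst = volume.restrict (Ici (0 : ℝ))) (R : ℝ) :
    μ (Icc (-R) R ×ˢ Icc (-(2 * R)) (2 * R)) < ∞ := by
  refine lt_of_le_of_lt (measure_mono (Set.prod_subset_preimage_fst _ _)) ?_
  have h2 : μ (Prod.fst ⁻¹' Icc (-R) R) = (μ.map Prod.fst) (Icc (-R) R) :=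
    (Measure.map_apply measurable_fst measurableSet_Icc).symm
  rw [h2, hmarg, Measure.restrict_apply measurableSet_Icc]
  exact lt_of_le_of_lt (measure_mono Set.inter_subset_left) measure_Icc_lt_top

lemma cont_integral {μ : Measure (ℝ × ℝ)}
    (hmarg : μ.map Prod.fst = volume.restrict (Ici (0 : ℝ)))
    (f : ℝ × ℝ → ℝ) (hfc : Continuous f) (hfs : HasCompactSupport f)
    {c₀ : ℝ} (hc₀ : c₀ ∈ Ioo (1 / 2 : ℝ) 2) :
    ContinuousAt (fun c => ∫ p, f p ∂(μ.map (vscale c))) c₀ := by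
  obtain ⟨C, hC⟩ := hfc.bounded_above_of_compact_support hfs
  obtain ⟨R, hR0, hR⟩ : ∃ R, 0 ≤ R ∧ tsupport f ⊆ Metric.closedBall 0 R := by
    obtain ⟨R, hR⟩ := hfs.isBounded.subset_closedBall 0
    exact ⟨max R 0, le_max_right _ _,
      hR.trans (Metric.closedBall_subset_closedBall (le_max_left _ _))⟩
  have hCnn : 0 ≤ C := le_trans (norm_nonneg (f 0)) (hC 0)
  set S : Set (ℝ × ℝ) := Icc (-R) R ×ˢ Icc (-(2 * R)) (2 * R) with hSdef
  have hSm : MeasurableSet S := measurableSet_Icc.prod measurableSet_Icc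
  have heq : ∀ c : ℝ, ∫ p, f p ∂(μ.map (vscale c)) = ∫ p, f (vscale c p) ∂μ := fun c =>
    integral_map (vscale_measurable c).aemeasurable hfc.aestronglyMeasurable
  simp only [heq]
  refine continuousAt_of_dominated (bound := S.indicator fun _ => C) ?_ ?_ ?_ ?_
  · exact Filter.Eventually.of_forall fun c =>
      (hfc.comp (vscale_continuous c)).aestronglyMeasurable
  · have hev : ∀ᶠ c in 𝓝 c₀, c ∈ Ioo (1 / 2 : ℝ) 2 := isOpen_Ioo.mem_nhds hc₀
    filter_upwards [hev] with c hc
    refine Filter.Eventually.of_forall fun p => ?_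
    by_cases hp : f (vscale c p) = 0
    · rw [hp, norm_zero]
      exact Set.indicator_nonneg (fun _ _ => hCnn) p
    · have hmem : vscale c p ∈ tsupport f := subset_tsupport f hp
      have hnorm : ‖vscale c p‖ ≤ R := mem_closedBall_zero_iff.1 (hR hmem)
      have h1 : |p.1| ≤ R := by
        have := (norm_fst_le (vscale c p)).trans hnorm
        rwa [Real.norm_eq_abs] at this
      have h2 : |c * p.2| ≤ R := by
        have := (norm_snd_le (vscale c p)).trans hnorm
        rwa [Real.norm_eq_abs] at this
      have h3 : |p.2| ≤ 2 * R := by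
        rw [abs_mul, abs_of_pos (by linarith [hc.1] : (0 : ℝ) < c)] at h2
        nlinarith [abs_nonneg p.2, hc.1]
      have hpS : p ∈ S := by
        refine ⟨?_, ?_⟩
        · exact abs_le.1 h1
        · have := abs_le.1 h3
          exact ⟨by linarith [this.1], this.2⟩
      rw [Set.indicator_of_mem hpS]
      exact hC _
  · rw [integrable_indicator_iff hSm]
    exact integrableOn_const (strip_finite hmarg R).ne
  · exact Filter.Eventually.of_forall fun p =>
      (hfc.comp (continuous_const.prodMk (continuous_id.mul continuous_const))).continuousAt

lemma preimage_mem_nhds {μ : Measure (ℝ × ℝ)}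
    (hmarg : μ.map Prod.fst = volume.restrict (Ici (0 : ℝ)))
    {c₀ : ℝ} (hc₀ : c₀ ∈ Ioo (1 / 2 : ℝ) 2) :
    ∀ V : Set (Measure (ℝ × ℝ)),
      TopologicalSpace.GenerateOpen
        {S | ∃ f : ℝ × ℝ → ℝ, Continuous f ∧ HasCompactSupport f ∧
          ∃ O : Set ℝ, IsOpen O ∧ S = {μ : Measure (ℝ × ℝ) | (∫ p, f p ∂μ) ∈ O}} V →
      μ.map (vscale c₀) ∈ V → {c : ℝ | μ.map (vscale c) ∈ V} ∈ 𝓝 c₀ := by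
  intro V hgen
  induction hgen with
  | basic U hU =>
    intro hmem
    obtain ⟨f, hfc, hfs, O, hO, rfl⟩ := hU
    exact (cont_integral hmarg f hfc hfs hc₀).preimage_mem_nhds (hO.mem_nhds hmem)
  | univ =>
    intro _
    exact Filter.univ_mem' fun c => Set.mem_univ _
  | inter U W hU hW ihU ihW =>
    intro hmem
    exact Filter.inter_mem (ihU hmem.1) (ihW hmem.2)
  | sUnion K hK ih =>
    intro hmem
    obtain ⟨U, hUK, hmemU⟩ := hmem
    exact Filter.mem_of_superset (ih U hUK hmemU) fun c hcU => Set.mem_sUnion.2 ⟨U, hUK, hcU⟩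

end RateMinAux

open RateMinAux in
/-- The minimum of the rate function `I` on an open subset of `𝓜` is either zero,
infinity, or is not achieved: for every open `G ⊆ 𝓜` and `μ ∈ G` with `0 < I(μ) < ∞`
there exists `ν ∈ G` with `I(ν) < I(μ)`. -/
theorem rate_min_not_achieved :
    ∀ G : Set (Measure (ℝ × ℝ)), IsOpenInM G →
      ∀ μ ∈ G, 0 < Irate μ → Irate μ < ∞ → ∃ ν ∈ G, Irate ν < Irate μ := by
  intro G hG μ hμG hI0 hItop
  obtain ⟨V, hV, rfl⟩ := hG
  obtain ⟨hμV, hμM⟩ := hμG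
  have hmarg := hμM.1
  have h1 : μ.map (vscale 1) = μ := by
    have hid : vscale 1 = id := funext fun p => by simp [vscale]
    rw [hid, Measure.map_id]
  have hmem1 : μ.map (vscale (1 : ℝ)) ∈ V := by rw [h1]; exact hμV
  have hc₀ : (1 : ℝ) ∈ Ioo (1 / 2 : ℝ) 2 := by norm_num
  have hgen : TopologicalSpace.GenerateOpen
      {S | ∃ f : ℝ × ℝ → ℝ, Continuous f ∧ HasCompactSupport f ∧
        ∃ O : Set ℝ, IsOpen O ∧ S = {μ : Measure (ℝ × ℝ) | (∫ p, f p ∂μ) ∈ O}} V := hV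
  have hnh := preimage_mem_nhds hmarg hc₀ V hgen hmem1
  obtain ⟨ε, hε, hball⟩ := Metric.mem_nhds_iff.1 hnh
  set c : ℝ := max (3 / 4) (1 - ε / 2) with hcdef
  have hc1 : c < 1 := max_lt (by norm_num) (by linarith)
  have hcpos : 0 < c := lt_of_lt_of_le (by norm_num) (le_max_left _ _)
  have hcball : c ∈ Metric.ball (1 : ℝ) ε := by
    have hle : 1 - ε / 2 ≤ c := le_max_right _ _
    rw [Metric.mem_ball, Real.dist_eq, abs_of_neg (by linarith : c - 1 < 0)]
    linarith
  refine ⟨μ.map (vscale c), ⟨hball hcball, mem_Mcal_map hμM hcpos⟩, ?_⟩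
  rw [Irate_map hcpos]
  calc ENNReal.ofReal c * Irate μ < 1 * Irate μ := by
        exact ENNReal.mul_lt_mul_left hI0.ne' hItop.ne (ENNReal.ofReal_lt_one.2 hc1)
    _ = Irate μ := one_mul _
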